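/- The set consisting of [K_n, K_1] and [K_{-n}, K_{-1}] for n > 1, together with [K_{-2}, K_1], [K_2, K_{-1}], and [K_1, K_{-1}], forms a vector-space basis of the derived subalgebra [K_0, K_0]. -/

import Mathlib

namespace Stmt4Aux

variable {V : Type} [LieRing V] [LieAlgebra ℂ V]

noncomputable def tp (K : ℤ → V) : ℕ → V := fun k =>
  Nat.rec (K 3) (fun k ih => ((k:ℂ) + 2)⁻¹ • (K ((k:ℤ) + 4) + ((k:ℂ) + 3) • ih)) k

lemma tp_zero (K : ℤ → V) : tp K 0 = K 3 := rfl
lemma tp_succ (K : ℤ → V) (k : ℕ) :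
    tp K (k+1) = ((k:ℂ) + 2)⁻¹ • (K ((k:ℤ) + 4) + ((k:ℂ) + 3) • tp K k) := rfl

noncomputable def tn (K : ℤ → V) : ℕ → V := fun k =>
  Nat.rec (-K (-3)) (fun k ih => (-((k:ℂ) + 2))⁻¹ • (K (-(k:ℤ) - 4) - ((k:ℂ) + 3) • ih)) k

lemma tn_zero (K : ℤ → V) : tn K 0 = -K (-3) := rfl
lemma tn_succ (K : ℤ → V) (k : ℕ) :
    tn K (k+1) = (-((k:ℂ) + 2))⁻¹ • (K (-(k:ℤ) - 4) - ((k:ℂ) + 3) • tn K k) := rfl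

noncomputable def tt (K : ℤ → V) (m : ℤ) : V :=
  if 3 ≤ m then tp K (m - 3).toNat else if m ≤ -3 then tn K (-3 - m).toNat else 0

lemma tt_small (K : ℤ → V) (m : ℤ) (h1 : -3 < m) (h2 : m < 3) : tt K m = 0 := by
  unfold tt
  rw [if_neg (by omega), if_neg (by omega)]

lemma L1 (K : ℤ → V) (n : ℤ) (hn : 2 ≤ n) :
    ((n:ℂ) - 1) • tt K (n+1) - (n:ℂ) • tt K n = K (n+1) := by
  by_cases h3 : 3 ≤ n
  · set k := (n-3).toNat with hkdef
    have hk : n = (k : ℤ) + 3 := by omega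
    have h1 : tt K n = tp K k := by unfold tt; rw [if_pos h3]
    have h2 : tt K (n+1) = tp K (k+1) := by
      unfold tt; rw [if_pos (by omega)]; congr 1; omega
    have hc : (n:ℂ) = (k:ℂ) + 3 := by rw [hk]; push_cast; ring
    have hKi : K (n+1) = K ((k:ℤ) + 4) := by congr 1; omega
    have hne : (k:ℂ) + 2 ≠ 0 := by
      have := Nat.cast_ne_zero (R := ℂ) |>.mpr (by omega : k + 2 ≠ 0)
      push_cast at this; exact this
    rw [h1, h2, hc, hKi, tp_succ,
      show (k:ℂ) + 3 - 1 = (k:ℂ) + 2 by ring, smul_smul, mul_inv_cancel₀ hne, one_smul]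
    module
  · have h2 : n = 2 := by omega
    subst h2
    have e1 : tt K (2+1) = K 3 := by
      rw [show (2:ℤ)+1 = 3 by norm_num]
      unfold tt
      rw [if_pos (by omega), show ((3:ℤ)-3).toNat = 0 by norm_num, tp_zero]
    have e2 : tt K 2 = 0 := tt_small K 2 (by omega) (by omega)
    rw [e1, e2, show (2:ℤ)+1 = 3 by norm_num]
    norm_num

lemma L2 (K : ℤ → V) (n : ℤ) (hn : n ≤ -2) :
    ((n:ℂ) + 1) • tt K (n-1) - (n:ℂ) • tt K n = K (n-1) := by
  by_cases h3 : n ≤ -3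
  · set k := (-3-n).toNat with hkdef
    have hk : n = -(k : ℤ) - 3 := by omega
    have h1 : tt K n = tn K k := by unfold tt; rw [if_neg (by omega), if_pos h3]
    have h2 : tt K (n-1) = tn K (k+1) := by
      unfold tt; rw [if_neg (by omega), if_pos (by omega)]; congr 1; omega
    have hc : (n:ℂ) = -(k:ℂ) - 3 := by rw [hk]; push_cast; ring
    have hKi : K (n-1) = K (-(k:ℤ) - 4) := by congr 1; omega
    have hne : -((k:ℂ) + 2) ≠ 0 := by
      have := Nat.cast_ne_zero (R := ℂ) |>.mpr (by omega : k + 2 ≠ 0)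
      push_cast at this
      exact neg_ne_zero.mpr this
    rw [h1, h2, hc, hKi, tn_succ,
      show -(k:ℂ) - 3 + 1 = -((k:ℂ) + 2) by ring, smul_smul, mul_inv_cancel₀ hne, one_smul]
    module
  · have h2 : n = -2 := by omega
    subst h2
    have e1 : tt K (-2-1) = -K (-3) := by
      rw [show (-2:ℤ)-1 = -3 by norm_num]
      unfold tt
      rw [if_neg (by omega), if_pos (by omega), show (-3 - (-3:ℤ)).toNat = 0 by norm_num, tn_zero]
    have e2 : tt K (-2) = 0 := tt_small K (-2) (by omega) (by omega)
    rw [e1, e2, show (-2:ℤ)-1 = -3 by norm_num]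
    norm_num

end Stmt4Aux

open Stmt4Aux in
/-- The family `⁅K n, K 1⁆`, `⁅K (-n), K (-1)⁆` for `n > 1` together with `⁅K (-2), K 1⁆`,
`⁅K 2, K (-1)⁆`, `⁅K 1, K (-1)⁆` is a basis of the derived subalgebra `[K₀, K₀]`. -/
theorem stmt4 (V : Type) [LieRing V] [LieAlgebra ℂ V] (K : ℤ → V)
    (hK0 : K 0 = 0)
    (hbr : ∀ m n : ℤ, m ≠ -n →
      ⁅K m, K n⁆ = ((m : ℂ) - n) • K (m + n) - (m : ℂ) • K m + (n : ℂ) • K n)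
    (hbr' : ∀ m : ℤ, ⁅K m, K (-m)⁆ = -((m : ℂ) • K m) - (m : ℂ) • K (-m))
    (b : Module.Basis {n : ℤ // n ≠ 0} ℂ V) (hb : ∀ n : {n : ℤ // n ≠ 0}, b n = K n.1) :
    let f : ℤ → V := fun n =>
      if 2 ≤ n then ⁅K n, K 1⁆
      else if n ≤ -2 then ⁅K n, K (-1)⁆
      else if n = 1 then ⁅K (-2), K 1⁆
      else if n = 0 then ⁅K 1, K (-1)⁆
      else ⁅K 2, K (-1)⁆
    LinearIndependent ℂ f ∧
    Submodule.span ℂ (Set.range f) = Submodule.span ℂ {x : V | ∃ a b : V, x = ⁅a, b⁆} := by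
  intro f
  have hfdef : ∀ n : ℤ, f n =
      if 2 ≤ n then ⁅K n, K 1⁆
      else if n ≤ -2 then ⁅K n, K (-1)⁆
      else if n = 1 then ⁅K (-2), K 1⁆
      else if n = 0 then ⁅K 1, K (-1)⁆
      else ⁅K 2, K (-1)⁆ := fun n => rfl
  -- explicit expansions of f
  have hf2 : ∀ n : ℤ, 2 ≤ n → f n = ((n:ℂ) - 1) • K (n+1) - (n:ℂ) • K n + K 1 := by
    intro n hn
    rw [hfdef n, if_pos hn, hbr n 1 (by omega)]
    norm_num
  have hfm : ∀ n : ℤ, n ≤ -2 → f n = ((n:ℂ) + 1) • K (n-1) - (n:ℂ) • K n - K (-1) := by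
    intro n hn
    rw [hfdef n, if_neg (by omega), if_pos hn, hbr n (-1) (by omega),
      show n + (-1) = n - 1 by ring]
    push_cast
    module
  have hf1 : f 1 = (-3:ℂ) • K (-1) + (2:ℂ) • K (-2) + K 1 := by
    rw [hfdef 1, if_neg (by omega), if_neg (by omega), if_pos rfl, hbr (-2) 1 (by omega),
      show (-2:ℤ) + 1 = -1 by norm_num]
    push_cast
    module
  have hf0 : f 0 = -K 1 - K (-1) := by
    rw [hfdef 0, if_neg (by omega), if_neg (by omega), if_neg (by omega), if_pos rfl, hbr' 1]
    push_cast
    module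
  have hfn1 : f (-1) = (3:ℂ) • K 1 - (2:ℂ) • K 2 - K (-1) := by
    rw [hfdef (-1), if_neg (by omega), if_neg (by omega), if_neg (by omega), if_neg (by omega),
      hbr 2 (-1) (by omega), show (2:ℤ) + (-1) = 1 by norm_num]
    push_cast
    module
  -- the weight functional φ
  set φ : V →ₗ[ℂ] ℂ := b.constr ℂ (fun i => (i.1 : ℂ)) with hφdef
  have phiK : ∀ m : ℤ, φ (K m) = (m : ℂ) := by
    intro m
    by_cases hm : m = 0
    · subst hm; rw [hK0]; simp
    · rw [show K m = b ⟨m, hm⟩ from (hb ⟨m, hm⟩).symm, hφdef, Module.Basis.constr_basis]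
  have hbrφ : ∀ i j : ℤ, φ ⁅K i, K j⁆ = 0 := by
    intro i j
    by_cases hij : i = -j
    · rw [show j = -i by omega, hbr' i, map_sub, map_neg, map_smul, map_smul, phiK, phiK]
      simp only [smul_eq_mul]
      push_cast
      ring
    · rw [hbr i j hij, map_add, map_sub, map_smul, map_smul, map_smul, phiK, phiK, phiK]
      simp only [smul_eq_mul]
      push_cast
      ring
  have had : ∀ x y : V, φ ⁅x, y⁆ = 0 := by
    have h1 : ∀ i : ℤ, φ ∘ₗ ((LieAlgebra.ad ℂ V) (K i) : V →ₗ[ℂ] V) = 0 := by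
      intro i
      apply b.ext
      intro j
      simp only [LinearMap.comp_apply, LieAlgebra.ad_apply, LinearMap.zero_apply, hb j]
      exact hbrφ i j.1
    have h1' : ∀ (i : ℤ) (y : V), φ ⁅K i, y⁆ = 0 := by
      intro i y
      have := LinearMap.congr_fun (h1 i) y
      simpa [LieAlgebra.ad_apply] using this
    intro x y
    have h2 : φ ∘ₗ ((LieAlgebra.ad ℂ V) x : V →ₗ[ℂ] V) = 0 := by
      apply b.ext
      intro j
      simp only [LinearMap.comp_apply, LieAlgebra.ad_apply, LinearMap.zero_apply, hb j]
      rw [← lie_skew, map_neg, h1' j.1 x, neg_zero]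
    have := LinearMap.congr_fun h2 y
    simpa [LieAlgebra.ad_apply] using this
  have hφf : ∀ n : ℤ, φ (f n) = 0 := by
    intro n
    rw [hfdef n]
    split_ifs <;> exact had _ _
  -- the map T detecting leading coefficients
  set T : V →ₗ[ℂ] V := b.constr ℂ (fun i => tt K i.1) with hTdef
  have hTK : ∀ m : ℤ, T (K m) = tt K m := by
    intro m
    by_cases hm : m = 0
    · subst hm
      rw [hK0, map_zero, tt_small K 0 (by omega) (by omega)]
    · rw [show K m = b ⟨m, hm⟩ from (hb ⟨m, hm⟩).symm, hTdef, Module.Basis.constr_basis]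
  have hT2 : ∀ n : ℤ, 2 ≤ n → T (f n) = K (n+1) := by
    intro n hn
    rw [hf2 n hn, map_add, map_sub, map_smul, map_smul, hTK, hTK, hTK,
      tt_small K 1 (by omega) (by omega), add_zero]
    exact L1 K n hn
  have hTm : ∀ n : ℤ, n ≤ -2 → T (f n) = K (n-1) := by
    intro n hn
    rw [hfm n hn, map_sub, map_sub, map_smul, map_smul, hTK, hTK, hTK,
      tt_small K (-1) (by omega) (by omega), sub_zero]
    exact L2 K n hn
  have hT1 : T (f 1) = 0 := by
    rw [hf1, map_add, map_add, map_smul, map_smul, hTK, hTK, hTK,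
      tt_small K (-1) (by omega) (by omega), tt_small K (-2) (by omega) (by omega),
      tt_small K 1 (by omega) (by omega)]
    simp
  have hT0 : T (f 0) = 0 := by
    rw [hf0, map_sub, map_neg, hTK, hTK,
      tt_small K (-1) (by omega) (by omega), tt_small K 1 (by omega) (by omega)]
    simp
  have hTn1 : T (f (-1)) = 0 := by
    rw [hfn1, map_sub, map_sub, map_smul, map_smul, hTK, hTK, hTK,
      tt_small K (-1) (by omega) (by omega), tt_small K 2 (by omega) (by omega),
      tt_small K 1 (by omega) (by omega)]
    simp
  -- coordinate functionals on K
  have coordK : ∀ (j : {n : ℤ // n ≠ 0}) (m : ℤ),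
      b.coord j (K m) = if m = j.1 then 1 else 0 := by
    intro j m
    by_cases hm : m = 0
    · subst hm
      rw [hK0, map_zero, if_neg (fun h => j.2 h.symm)]
    · rw [show K m = b ⟨m, hm⟩ from (hb ⟨m, hm⟩).symm, Module.Basis.coord_apply, Module.Basis.repr_self,
        Finsupp.single_apply]
      simp [Subtype.ext_iff]
  constructor
  · -- linear independence
    rw [linearIndependent_iff]
    intro l hl
    have key : ∀ (μ : V →ₗ[ℂ] ℂ) (n₀ : ℤ),
        (∀ n : ℤ, n ≠ n₀ → l n = 0 ∨ μ (f n) = 0) → l n₀ * μ (f n₀) = 0 := by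
      intro μ n₀ h
      have h0 : μ (Finsupp.linearCombination ℂ f l) = 0 := by rw [hl, map_zero]
      rw [Finsupp.linearCombination_apply, map_finsuppSum] at h0
      simp only [map_smul, smul_eq_mul] at h0
      rwa [Finsupp.sum_eq_single n₀
        (fun n hn hne => by
          rcases h n hne with h' | h'
          · rw [h', zero_mul]
          · rw [h', mul_zero])
        (fun _ => by rw [zero_mul])] at h0
    have st1 : ∀ n₀ : ℤ, 2 ≤ n₀ → l n₀ = 0 := by
      intro n₀ hn₀
      have h := key ((b.coord ⟨n₀ + 1, by omega⟩).comp T) n₀ ?side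
      case side =>
        intro n hne
        right
        rw [LinearMap.comp_apply]
        by_cases h2 : 2 ≤ n
        · rw [hT2 n h2, coordK, if_neg (by simp only []; omega)]
        · by_cases hm2 : n ≤ -2
          · rw [hTm n hm2, coordK, if_neg (by simp only []; omega)]
          · have hn3 : n = -1 ∨ n = 0 ∨ n = 1 := by omega
            rcases hn3 with h | h | h <;> subst h <;> simp [hTn1, hT0, hT1]
      rw [LinearMap.comp_apply, hT2 n₀ hn₀, coordK, if_pos rfl, mul_one] at h
      exact h
    have st2 : ∀ n₀ : ℤ, n₀ ≤ -2 → l n₀ = 0 := by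
      intro n₀ hn₀
      have h := key ((b.coord ⟨n₀ - 1, by omega⟩).comp T) n₀ ?side
      case side =>
        intro n hne
        right
        rw [LinearMap.comp_apply]
        by_cases h2 : 2 ≤ n
        · rw [hT2 n h2, coordK, if_neg (by simp only []; omega)]
        · by_cases hm2 : n ≤ -2
          · rw [hTm n hm2, coordK, if_neg (by simp only []; omega)]
          · have hn3 : n = -1 ∨ n = 0 ∨ n = 1 := by omega
            rcases hn3 with h | h | h <;> subst h <;> simp [hTn1, hT0, hT1]
      rw [LinearMap.comp_apply, hTm n₀ hn₀, coordK, if_pos rfl, mul_one] at h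
      exact h
    have st3 : l 1 = 0 := by
      have h := key (b.coord ⟨-2, by omega⟩) 1 ?side
      case side =>
        intro n hne
        by_cases h2 : 2 ≤ n
        · exact Or.inl (st1 n h2)
        · by_cases hm2 : n ≤ -2
          · exact Or.inl (st2 n hm2)
          · right
            have hn3 : n = -1 ∨ n = 0 := by omega
            rcases hn3 with h | h <;> subst h
            · rw [hfn1, map_sub, map_sub, map_smul, map_smul, coordK, coordK, coordK]
              norm_num
            · rw [hf0, map_sub, map_neg, coordK, coordK]
              norm_num
      rw [hf1, map_add, map_add, map_smul, map_smul, coordK, coordK, coordK] at h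
      norm_num at h
      exact h
    have st4 : l (-1) = 0 := by
      have h := key (b.coord ⟨2, by omega⟩) (-1) ?side
      case side =>
        intro n hne
        by_cases h2 : 2 ≤ n
        · exact Or.inl (st1 n h2)
        · by_cases hm2 : n ≤ -2
          · exact Or.inl (st2 n hm2)
          · right
            have hn3 : n = 0 ∨ n = 1 := by omega
            rcases hn3 with h | h <;> subst h
            · rw [hf0, map_sub, map_neg, coordK, coordK]
              norm_num
            · rw [hf1, map_add, map_add, map_smul, map_smul, coordK, coordK, coordK]
              norm_num
      rw [hfn1, map_sub, map_sub, map_smul, map_smul, coordK, coordK, coordK] at h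
      norm_num at h
      exact h
    have st5 : l 0 = 0 := by
      have h := key (b.coord ⟨-1, by omega⟩) 0 ?side
      case side =>
        intro n hne
        by_cases h2 : 2 ≤ n
        · exact Or.inl (st1 n h2)
        · by_cases hm2 : n ≤ -2
          · exact Or.inl (st2 n hm2)
          · have hn3 : n = -1 ∨ n = 1 := by omega
            rcases hn3 with h | h <;> subst h
            · exact Or.inl st4
            · exact Or.inl st3
      rw [hf0, map_sub, map_neg, coordK, coordK] at h
      norm_num at h
      exact h
    ext n
    simp only [Finsupp.coe_zero, Pi.zero_apply]
    by_cases h2 : 2 ≤ n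
    · exact st1 n h2
    · by_cases hm2 : n ≤ -2
      · exact st2 n hm2
      · have hn3 : n = -1 ∨ n = 0 ∨ n = 1 := by omega
        rcases hn3 with h | h | h <;> subst h
        exacts [st4, st5, st3]
  · -- span equality
    have h2mem : K 2 - (2:ℂ) • K 1 ∈ Submodule.span ℂ (Set.range f) := by
      have hid : K 2 - (2:ℂ) • K 1 = (2:ℂ)⁻¹ • (f 0 - f (-1)) := by
        rw [hf0, hfn1]
        match_scalars <;> norm_num
      rw [hid]
      exact Submodule.smul_mem _ _ (Submodule.sub_mem _
        (Submodule.subset_span ⟨0, rfl⟩) (Submodule.subset_span ⟨-1, rfl⟩))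
    have hm2mem : K (-2) - ((-2:ℂ)) • K 1 ∈ Submodule.span ℂ (Set.range f) := by
      have hid : K (-2) - ((-2:ℂ)) • K 1 = (2:ℂ)⁻¹ • (f 1 - (3:ℂ) • f 0) := by
        rw [hf0, hf1]
        match_scalars <;> norm_num
      rw [hid]
      exact Submodule.smul_mem _ _ (Submodule.sub_mem _
        (Submodule.subset_span ⟨1, rfl⟩)
        (Submodule.smul_mem _ _ (Submodule.subset_span ⟨0, rfl⟩)))
    have hSup : ∀ m : ℤ, 1 ≤ m → K m - (m:ℂ) • K 1 ∈ Submodule.span ℂ (Set.range f) := by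
      refine fun m hm => Int.le_induction
        (motive := fun m _ => K m - (m:ℂ) • K 1 ∈ Submodule.span ℂ (Set.range f)) ?_ ?_ m hm
      · norm_num
      · intro n hn ih
        push_cast
        rcases eq_or_lt_of_le hn with h | h
        · rw [← h]
          norm_num
          convert h2mem using 2 <;> norm_num
        · have hn2 : 2 ≤ n := by omega
          have hne : (n:ℂ) - 1 ≠ 0 := by
            have := Int.cast_ne_zero (α := ℂ) |>.mpr (show n - 1 ≠ 0 by omega)
            push_cast at this; exact this
          have hid : K (n + 1) - ((n:ℂ) + 1) • K 1
              = ((n:ℂ) - 1)⁻¹ • (f n + (n:ℂ) • (K n - (n:ℂ) • K 1)) := by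
            rw [hf2 n hn2]
            match_scalars <;> field_simp <;> ring
          rw [hid]
          exact Submodule.smul_mem _ _ (Submodule.add_mem _
            (Submodule.subset_span ⟨n, rfl⟩) (Submodule.smul_mem _ _ ih))
    have hSdown : ∀ m : ℤ, m ≤ -1 → K m - (m:ℂ) • K 1 ∈ Submodule.span ℂ (Set.range f) := by
      refine fun m hm => Int.le_induction_down
        (motive := fun m _ => K m - (m:ℂ) • K 1 ∈ Submodule.span ℂ (Set.range f)) ?_ ?_ m hm
      · show K (-1) - ((-1:ℤ):ℂ) • K 1 ∈ Submodule.span ℂ (Set.range f)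
        have hid : K (-1) - ((-1:ℤ):ℂ) • K 1 = -f 0 := by
          rw [hf0]; push_cast; module
        rw [hid]
        exact Submodule.neg_mem _ (Submodule.subset_span ⟨0, rfl⟩)
      · intro n hn ih
        push_cast
        rcases eq_or_lt_of_le hn with h | h
        · rw [h]
          have hid : K (-1 - 1) - (((-1:ℤ):ℂ) - 1) • K 1 = (2:ℂ)⁻¹ • (f 1 - (3:ℂ) • f 0) := by
            rw [hf0, hf1, show (-1:ℤ) - 1 = -2 by norm_num]
            match_scalars <;> norm_num
          rw [hid]
          exact Submodule.smul_mem _ _ (Submodule.sub_mem _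
            (Submodule.subset_span ⟨1, rfl⟩)
            (Submodule.smul_mem _ _ (Submodule.subset_span ⟨0, rfl⟩)))
        · have hn2 : n ≤ -2 := by omega
          have hne : (n:ℂ) + 1 ≠ 0 := by
            have := Int.cast_ne_zero (α := ℂ) |>.mpr (show n + 1 ≠ 0 by omega)
            push_cast at this; exact this
          have hid : K (n - 1) - ((n:ℂ) - 1) • K 1
              = ((n:ℂ) + 1)⁻¹ • (f n + (n:ℂ) • (K n - (n:ℂ) • K 1) - f 0) := by
            rw [hfm n hn2, hf0]
            match_scalars <;> field_simp <;> ring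
          rw [hid]
          exact Submodule.smul_mem _ _ (Submodule.sub_mem _
            (Submodule.add_mem _ (Submodule.subset_span ⟨n, rfl⟩)
              (Submodule.smul_mem _ _ ih))
            (Submodule.subset_span ⟨0, rfl⟩))
    have hS : ∀ m : ℤ, K m - (m:ℂ) • K 1 ∈ Submodule.span ℂ (Set.range f) := by
      intro m
      by_cases h1 : 1 ≤ m
      · exact hSup m h1
      · by_cases h2 : m ≤ -1
        · exact hSdown m h2
        · have : m = 0 := by omega
          subst this
          simp [hK0]
    have htop : ∀ v : V, v ∈ Submodule.span ℂ (Set.range f) ⊔ Submodule.span ℂ {K 1} := by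
      intro v
      have hle : (⊤ : Submodule ℂ V) ≤ Submodule.span ℂ (Set.range f) ⊔ Submodule.span ℂ {K 1} := by
        rw [← b.span_eq]
        apply Submodule.span_le.2
        rintro x ⟨i, rfl⟩
        rw [hb i, show K i.1 = (K i.1 - (i.1:ℂ) • K 1) + (i.1:ℂ) • K 1 by module]
        exact Submodule.add_mem _ (Submodule.mem_sup_left (hS i.1))
          (Submodule.mem_sup_right (Submodule.smul_mem _ _ (Submodule.mem_span_singleton_self _)))
      exact hle trivial
    apply le_antisymm
    · apply Submodule.span_le.2
      rintro x ⟨n, rfl⟩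
      apply Submodule.subset_span
      rw [hfdef n]
      split_ifs <;> exact ⟨_, _, rfl⟩
    · apply Submodule.span_le.2
      rintro x ⟨y, z, rfl⟩
      obtain ⟨w, hw, u, hu, heq⟩ := Submodule.mem_sup.1 (htop ⁅y, z⁆)
      obtain ⟨c, rfl⟩ := Submodule.mem_span_singleton.1 hu
      have hφw : φ w = 0 := by
        have hle : Submodule.span ℂ (Set.range f) ≤ LinearMap.ker φ :=
          Submodule.span_le.2 (by rintro _ ⟨n, rfl⟩; exact hφf n)
        exact hle hw
      have hc : c = 0 := by
        have h := congrArg φ heq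
        rw [map_add, map_smul, hφw, had y z, phiK 1] at h
        simpa using h
      rw [← heq, hc]
      simpa using hw
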